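/- arXiv:math-ph/0212025 — 2 statements merged into one kernel-verified Lean document; each statement's English description precedes it below -/
import Mathlib

section
/- Let γ: (-2ε,2ε) → E be piecewise C² (with corner at 0), let γ₊′(0) and γ₋′(0) denote the right-hand and left-hand derivatives of γ at 0, set M₂ = sup_{u ∈ (-2ε,2ε) \ {0}} ‖γ″(u)‖ (assumed finite), and let δ ∈ (0,ε]. Then for every t with |t| ≤ δ²/100, ‖γ_δ″(t) − (γ₊′(0) − γ₋′(0)) · (100/δ²) · φ(100t/δ²)‖ ≤ M₂; i.e., up to an error bounded independently of δ, the second derivative of the mollified path concentrates the jump of the first derivative of γ as a kernel of total integral 1 supported in [-δ²/100, δ²/100]. -/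
open MeasureTheory Set

/-- The variable mollification scale `σ_δ(t) = δ² σ(t/δ)`. -/
noncomputable def sigmaDel (σ : ℝ → ℝ) (δ t : ℝ) : ℝ := δ ^ 2 * σ (t / δ)

/-- The variable-scale mollification `γ_δ(s) = ∫ γ(s - σ_δ(s) t) φ(t) dt` (Bochner integral). -/
noncomputable def mollify {E : Type*} [NormedAddCommGroup E] [NormedSpace ℝ E]
    (φ σ : ℝ → ℝ) (δ : ℝ) (γ : ℝ → E) (s : ℝ) : E :=
  ∫ t : ℝ, φ t • γ (s - sigmaDel σ δ s * t)

section Aux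

variable {E : Type*} [NormedAddCommGroup E] [NormedSpace ℝ E]

/-- Continuity of the integrand `u ↦ φ u • g (x - c u)` when `φ` has support in `[-1,1]`
and `g` is continuous at all reachable points. -/
lemma aux_cont_integrand (φ : ℝ → ℝ) (hφc : Continuous φ)
    (hφsupp : Function.support φ ⊆ Set.Icc (-1) 1) (g : ℝ → E) (c x : ℝ)
    (h : ∀ u : ℝ, |u| ≤ 2 → ContinuousAt g (x - c*u)) :
    Continuous (fun u => φ u • g (x - c*u)) := by
  rw [continuous_iff_continuousAt]
  intro u₀
  rcases lt_or_ge (|u₀|) (3/2) with h1 | h1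
  · have hinner : ContinuousAt (fun u : ℝ => g (x - c*u)) u₀ := by
      have hc : ContinuousAt (fun u : ℝ => x - c*u) u₀ := by fun_prop
      exact ContinuousAt.comp (g := g) (f := fun u : ℝ => x - c*u) (h u₀ (by linarith)) hc
    exact hφc.continuousAt.smul hinner
  · have hopen : {u : ℝ | 1 < |u|} ∈ nhds u₀ := by
      have : IsOpen {u : ℝ | 1 < |u|} := isOpen_lt continuous_const continuous_abs
      exact this.mem_nhds (by simp only [mem_setOf_eq]; linarith)
    have hev : (fun u => φ u • g (x - c*u)) =ᶠ[nhds u₀] (fun _ => (0:E)) := by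
      filter_upwards [hopen] with u hu
      have hphi0 : φ u = 0 := by
        by_contra hne
        have h5 := hφsupp hne
        rw [Set.mem_Icc] at h5
        have h6 : |u| ≤ 1 := abs_le.2 h5
        have hu' : (1:ℝ) < |u| := hu
        linarith
      simp [hphi0]
    exact continuousAt_const.congr hev.symm

lemma aux_integrable (φ : ℝ → ℝ) (hφc : Continuous φ)
    (hφsupp : Function.support φ ⊆ Set.Icc (-1) 1) (g : ℝ → E) (c x : ℝ)
    (h : ∀ u : ℝ, |u| ≤ 2 → ContinuousAt g (x - c*u)) :
    Integrable (fun u => φ u • g (x - c*u)) := by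
  refine (aux_cont_integrand φ hφc hφsupp g c x h).integrable_of_hasCompactSupport ?_
  refine HasCompactSupport.intro (K := Set.Icc (-1) 1) isCompact_Icc (fun u hu => ?_)
  have : φ u = 0 := by
    by_contra hne
    exact hu (hφsupp hne)
  simp [this]

end Aux

set_option maxHeartbeats 1600000 in
theorem mollify_second_deriv_concentration
    {E : Type*} [NormedAddCommGroup E] [NormedSpace ℝ E] [CompleteSpace E]
    (ε : ℝ) (hε0 : 0 < ε) (hε1 : ε ≤ 1)
    (φ σ : ℝ → ℝ)
    (hφsm : ContDiff ℝ (⊤ : ℕ∞) φ) (hφsupp : Function.support φ ⊆ Set.Icc (-1) 1)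
    (hφ0 : ∀ t, 0 ≤ φ t) (hφ1 : ∀ t, φ t ≤ 1) (hφint : (∫ t : ℝ, φ t) = 1)
    (hσsm : ContDiff ℝ (⊤ : ℕ∞) σ) (hσsupp : Function.support σ ⊆ Set.Icc (-(1/2)) (1/2))
    (hσ0 : ∀ t, 0 ≤ σ t) (hσle : ∀ t, σ t ≤ 1/100)
    (hσeq : ∀ t : ℝ, |t| ≤ 1/4 → σ t = 1/100)
    (hσpos : ∀ t : ℝ, 1/4 < |t| → |t| < 1/2 → 0 < σ t)
    (γ : ℝ → E)
    (hγcont : ContinuousOn γ (Set.Ioo (-(2*ε)) (2*ε)))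
    (hγm : ContDiffOn ℝ 2 γ (Set.Ioc (-(2*ε)) 0))
    (hγp : ContDiffOn ℝ 2 γ (Set.Ico 0 (2*ε)))
    (γ' : ℝ → E)
    (hγ'1 : ∀ u ∈ Set.Ioo (-(2*ε)) (2*ε), u ≠ 0 → HasDerivAt γ (γ' u) u)
    (hγ'0 : HasDerivWithinAt γ (γ' 0) (Set.Ici 0) 0)
    (γ'' : ℝ → E)
    (hγ''1 : ∀ u ∈ Set.Ioo (-(2*ε)) (2*ε), u ≠ 0 → HasDerivAt γ' (γ'' u) u)
    (hγ''0 : HasDerivWithinAt γ' (γ'' 0) (Set.Ici 0) 0)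
    (vp vm : E)
    (hvp : HasDerivWithinAt γ vp (Set.Ici 0) 0)
    (hvm : HasDerivWithinAt γ vm (Set.Iic 0) 0)
    (M₂ : ℝ)
    (hM₂ : M₂ = sSup ((fun u => ‖γ'' u‖) '' (Set.Ioo (-(2*ε)) (2*ε) \ {0})))
    (hM₂bd : BddAbove ((fun u => ‖γ'' u‖) '' (Set.Ioo (-(2*ε)) (2*ε) \ {0})))
    (δ : ℝ) (hδ0 : 0 < δ) (hδε : δ ≤ ε)
 :
    ∀ t : ℝ, |t| ≤ δ^2/100 →
      ‖deriv (deriv (mollify φ σ δ γ)) t -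
        ((100/δ^2) * φ (100 * t/δ^2)) • (vp - vm)‖ ≤ M₂ := by
  intro t ht
  have hδ1 : δ ≤ 1 := hδε.trans hε1
  set c : ℝ := δ^2/100 with hcdef
  have hc0 : 0 < c := by positivity
  have hcδ : c ≤ δ/100 := by
    rw [hcdef]; rw [div_le_div_iff₀ (by norm_num) (by norm_num)]; nlinarith
  set J : E := vp - vm with hJdef
  set I2 : Set ℝ := Set.Ioo (-(2*ε)) (2*ε) with hI2def
  -- basic facts on M₂
  have hbd : ∀ u, u ∈ I2 → u ≠ 0 → ‖γ'' u‖ ≤ M₂ := by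
    intro u hu hne
    rw [hM₂]
    exact le_csSup hM₂bd ⟨u, ⟨hu, hne⟩, rfl⟩
  have hM0 : 0 ≤ M₂ := by
    have hε' : ε ∈ I2 := by constructor <;> [linarith; linarith]
    exact (norm_nonneg _).trans (hbd ε hε' (ne_of_gt hε0))
  -- γ' 0 = vp
  have hvp0 : γ' 0 = vp := by
    have h1 := hγ'0.derivWithin ((uniqueDiffOn_Ici (0:ℝ)) 0 Set.self_mem_Ici)
    have h2 := hvp.derivWithin ((uniqueDiffOn_Ici (0:ℝ)) 0 Set.self_mem_Ici)
    rw [← h1, ← h2]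
  -- Lipschitz on each open side
  have hlipside : ∀ s : Set ℝ, Convex ℝ s → s ⊆ I2 → (0:ℝ) ∉ s →
      ∀ x ∈ s, ∀ y ∈ s, ‖γ' x - γ' y‖ ≤ M₂ * |x - y| := by
    intro s hconv hsub h0 x hx y hy
    have hlip : LipschitzOnWith M₂.toNNReal γ' s := by
      apply hconv.lipschitzOnWith_of_nnnorm_hasDerivWithin_le
        (f' := γ'')
      · intro z hz
        exact (hγ''1 z (hsub hz) (fun h => h0 (h ▸ hz))).hasDerivWithinAt
      · intro z hz
        rw [← NNReal.coe_le_coe, coe_nnnorm, Real.coe_toNNReal _ hM0]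
        exact hbd z (hsub hz) (fun h => h0 (h ▸ hz))
    have := (lipschitzOnWith_iff_dist_le_mul.1 hlip) x hx y hy
    rwa [dist_eq_norm, Real.dist_eq, Real.coe_toNNReal _ hM0] at this
  have hLipN := hlipside (Set.Ioo (-(2*ε)) 0) (convex_Ioo _ _)
    (fun z hz => ⟨hz.1, lt_trans hz.2 (by linarith)⟩) (by simp)
  have hLipP := hlipside (Set.Ioo 0 (2*ε)) (convex_Ioo _ _)
    (fun z hz => ⟨lt_trans (by linarith) hz.1, hz.2⟩) (by simp)
  -- right-hand quantitative bound
  have hR : ∀ y ∈ Set.Ico (0:ℝ) (2*ε), ‖γ' y - vp‖ ≤ M₂ * |y| := by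
    intro y hy
    rcases eq_or_lt_of_le hy.1 with h0 | h0
    · rw [← h0, hvp0]; simp [hM0]
    · have htend : Filter.Tendsto γ' (nhdsWithin 0 (Set.Ioi 0)) (nhds vp) := by
        have hcw : ContinuousWithinAt γ' (Set.Ici 0) 0 := hγ''0.continuousWithinAt
        have := hcw.tendsto
        rw [hvp0] at this
        exact this.mono_left (nhdsWithin_mono _ Set.Ioi_subset_Ici_self)
      have hev : ∀ᶠ z in nhdsWithin 0 (Set.Ioi 0), ‖γ' y - γ' z‖ ≤ M₂ * |y - z| := by
        filter_upwards [Ioo_mem_nhdsGT_of_mem (Set.left_mem_Ico.2 h0)] with z hz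
        exact hLipP y ⟨h0, hy.2⟩ z ⟨hz.1, lt_trans hz.2 hy.2⟩
      have h1 : Filter.Tendsto (fun z => ‖γ' y - γ' z‖) (nhdsWithin 0 (Set.Ioi 0))
          (nhds ‖γ' y - vp‖) := ((tendsto_const_nhds.sub htend).norm)
      have h2 : Filter.Tendsto (fun z : ℝ => M₂ * |y - z|) (nhdsWithin 0 (Set.Ioi 0))
          (nhds (M₂ * |y|)) := by
        have : Filter.Tendsto (fun z : ℝ => M₂ * |y - z|) (nhds 0) (nhds (M₂ * |y - 0|)) := by
          apply Filter.Tendsto.mul tendsto_const_nhds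
          exact ((tendsto_const_nhds.sub Filter.tendsto_id).abs)
        simpa using this.mono_left nhdsWithin_le_nhds
      exact le_of_tendsto_of_tendsto h1 h2 hev
  -- left-hand quantitative bound
  have hLm : ∀ x ∈ Set.Ioo (-(2*ε)) (0:ℝ), ‖γ' x - vm‖ ≤ M₂ * |x| := by
    intro x hx
    have hx0 : x < 0 := hx.2
    by_contra hcon
    push_neg at hcon
    set η : ℝ := ‖γ' x - vm‖ - M₂ * |x| with hηdef
    have hη : 0 < η := by simp only [hηdef]; linarith
    -- little-o property of the left derivative
    have hvm' := hasDerivWithinAt_iff_isLittleO.1 hvm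
    have hev1 : ∀ᶠ z in nhdsWithin 0 (Set.Iio 0),
        ‖γ z - γ 0 - (z - 0) • vm‖ ≤ (η/2) * ‖z - (0:ℝ)‖ :=
      (hvm'.def (by positivity)).filter_mono (nhdsWithin_mono _ Set.Iio_subset_Iic_self)
    have hev2 : ∀ᶠ z in nhdsWithin 0 (Set.Iio 0), z ∈ Set.Ioo x 0 :=
      Ioo_mem_nhdsLT_of_mem (Set.right_mem_Ioc.2 hx0)
    obtain ⟨z, hz1, hz2⟩ := (hev1.and hev2).exists
    have hzI : z ∈ Set.Ioo (-(2*ε)) (0:ℝ) := ⟨lt_trans hx.1 hz2.1, hz2.2⟩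
    have hz0 : z < 0 := hz2.2
    -- E1 : mean value estimate on [z,0]
    have hE1 : ‖γ 0 - γ z + z • γ' z‖ ≤ M₂ * (-z) * (-z) := by
      have key := norm_image_sub_le_of_norm_deriv_right_le_segment
        (f := fun y => γ y - y • γ' z) (f' := fun y => γ' y - γ' z)
        (a := z) (b := 0) (C := M₂ * (-z)) ?_ ?_ ?_ 0 (Set.right_mem_Icc.2 hz0.le)
      · have : (fun y => γ y - y • γ' z) 0 - (fun y => γ y - y • γ' z) z
            = γ 0 - γ z + z • γ' z := by simp; abel
        rw [this] at key
        calc ‖γ 0 - γ z + z • γ' z‖ ≤ M₂ * (-z) * (0 - z) := key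
          _ = M₂ * (-z) * (-z) := by ring_nf
      · apply ContinuousOn.sub
        · apply hγcont.mono
          intro y hy
          exact ⟨lt_of_lt_of_le hzI.1 hy.1, lt_of_le_of_lt hy.2 (by linarith)⟩
        · exact (continuous_id.smul continuous_const).continuousOn
      · intro y hy
        have hyI : y ∈ Set.Ioo (-(2*ε)) (0:ℝ) := ⟨lt_of_lt_of_le hzI.1 hy.1, hy.2⟩
        have h1 : HasDerivAt γ (γ' y) y :=
          hγ'1 y ⟨hyI.1, lt_trans hyI.2 (by linarith)⟩ (ne_of_lt hyI.2)
        have h2 : HasDerivAt (fun y : ℝ => y • γ' z) (γ' z) y := by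
          simpa using (hasDerivAt_id y).smul_const (γ' z)
        exact (h1.sub h2).hasDerivWithinAt
      · intro y hy
        have hyI : y ∈ Set.Ioo (-(2*ε)) (0:ℝ) := ⟨lt_of_lt_of_le hzI.1 hy.1, hy.2⟩
        calc ‖γ' y - γ' z‖ ≤ M₂ * |y - z| := hLipN y hyI z hzI
          _ ≤ M₂ * (-z) := by
              apply mul_le_mul_of_nonneg_left _ hM0
              rw [abs_of_nonneg (by linarith [hy.1])]; linarith [hy.1, hy.2]
    -- E2 from the little-o bound
    have hE2 : ‖γ z - γ 0 - z • vm‖ ≤ (η/2) * (-z) := by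
      have := hz1
      simpa [abs_of_neg hz0] using this
    -- combine
    have hcomb : ‖z • (γ' z - vm)‖ ≤ M₂ * (-z) * (-z) + (η/2) * (-z) := by
      have : z • (γ' z - vm) = (γ 0 - γ z + z • γ' z) + (γ z - γ 0 - z • vm) := by
        simp [smul_sub]; abel
      rw [this]
      exact (norm_add_le _ _).trans (add_le_add hE1 hE2)
    have hz' : ‖γ' z - vm‖ ≤ M₂ * (-z) + η/2 := by
      rw [norm_smul, Real.norm_eq_abs, abs_of_neg hz0] at hcomb
      have h3 : (-z) * ‖γ' z - vm‖ ≤ (-z) * (M₂ * (-z) + η/2) := by nlinarith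
      exact le_of_mul_le_mul_left h3 (by linarith)
    have hfin : ‖γ' x - vm‖ ≤ M₂ * |x| + η/2 := by
      calc ‖γ' x - vm‖ ≤ ‖γ' x - γ' z‖ + ‖γ' z - vm‖ := by
            simpa using norm_add_le (γ' x - γ' z) (γ' z - vm)
        _ ≤ M₂ * |x - z| + (M₂ * (-z) + η/2) := add_le_add (hLipN x hx z hzI) hz'
        _ = M₂ * (z - x) + M₂ * (-z) + η/2 := by
            rw [abs_of_neg (by linarith [hz2.1] : x - z < 0)]; ring
        _ = M₂ * (-x) + η/2 := by ring
        _ = M₂ * |x| + η/2 := by rw [abs_of_neg hx0]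
    simp only [hηdef] at hfin
    linarith
  -- the straightened derivative
  set Γd : ℝ → E := fun z => γ' z - (if 0 ≤ z then J else 0) with hΓddef
  have hΓd0 : Γd 0 = vm := by
    simp only [hΓddef, if_pos le_rfl, hvp0, hJdef]; abel
  -- Lipschitz property of Γd on I2
  have hLipΓ : ∀ x ∈ I2, ∀ y ∈ I2, ‖Γd x - Γd y‖ ≤ M₂ * |x - y| := by
    have key : ∀ x ∈ I2, ∀ y ∈ I2, x ≤ y → ‖Γd y - Γd x‖ ≤ M₂ * (y - x) := by
      intro x hx y hy hxy
      rcases lt_or_ge x 0 with hx0 | hx0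
      · rcases lt_or_ge y 0 with hy0 | hy0
        · -- both negative
          have := hLipN y ⟨hy.1, hy0⟩ x ⟨hx.1, hx0⟩
          simp only [hΓddef, if_neg (not_le.2 hx0), if_neg (not_le.2 hy0), sub_zero]
          rwa [abs_of_nonneg (by linarith)] at this
        · -- x < 0 ≤ y
          have h1 : ‖γ' y - vp‖ ≤ M₂ * |y| := hR y ⟨hy0, hy.2⟩
          have h2 : ‖γ' x - vm‖ ≤ M₂ * |x| := hLm x ⟨hx.1, hx0⟩
          have : Γd y - Γd x = (γ' y - vp) - (γ' x - vm) := by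
            simp only [hΓddef, if_neg (not_le.2 hx0), if_pos hy0, hJdef, sub_zero]
            abel
          rw [this]
          calc ‖(γ' y - vp) - (γ' x - vm)‖ ≤ ‖γ' y - vp‖ + ‖γ' x - vm‖ := norm_sub_le _ _
            _ ≤ M₂ * |y| + M₂ * |x| := add_le_add h1 h2
            _ = M₂ * (y - x) := by
                rw [abs_of_nonneg hy0, abs_of_neg hx0]; ring
      · -- both nonnegative
        have hy0 : (0:ℝ) ≤ y := le_trans hx0 hxy
        have h1 : ‖γ' y - vp‖ ≤ M₂ * |y| := hR y ⟨hy0, hy.2⟩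
        have h2 : ‖γ' x - vp‖ ≤ M₂ * |x| := hR x ⟨hx0, hx.2⟩
        have hΓ : Γd y - Γd x = γ' y - γ' x := by
          simp only [hΓddef, if_pos hx0, if_pos hy0]; abel
        rcases eq_or_lt_of_le hx0 with hx0' | hx0'
        · rw [hΓ]
          have : γ' y - γ' x = γ' y - vp := by rw [← hx0', hvp0]
          rw [this]
          calc ‖γ' y - vp‖ ≤ M₂ * |y| := h1
            _ = M₂ * (y - x) := by rw [abs_of_nonneg hy0, ← hx0']; ring_nf
        · rw [hΓ]
          have := hLipP y ⟨lt_of_lt_of_le hx0' hxy, hy.2⟩ x ⟨hx0', hx.2⟩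
          rwa [abs_of_nonneg (by linarith)] at this
    intro x hx y hy
    rcases le_total x y with h | h
    · rw [← norm_neg, neg_sub, abs_sub_comm, abs_of_nonneg (by linarith)]
      exact key x hx y hy h
    · rw [abs_of_nonneg (by linarith)]
      exact key y hy x hx h
  -- derivative of the straightened path
  set Γf : ℝ → E := fun z => γ z - (max z 0) • J with hΓfdef
  have hΓderiv : ∀ z ∈ I2, HasDerivAt Γf (Γd z) z := by
    intro z hz
    rcases lt_trichotomy z 0 with hz0 | hz0 | hz0
    · have h1 : HasDerivAt γ (γ' z) z := hγ'1 z hz (ne_of_lt hz0)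
      have hev : Γf =ᶠ[nhds z] γ := by
        filter_upwards [Iio_mem_nhds hz0] with w hw
        simp only [hΓfdef, max_eq_right (le_of_lt (show w < 0 from hw)), zero_smul, sub_zero]
      have : HasDerivAt Γf (γ' z) z := h1.congr_of_eventuallyEq hev
      simpa only [hΓddef, if_neg (not_le.2 hz0), sub_zero] using this
    · subst hz0
      rw [hΓd0]
      rw [← hasDerivWithinAt_univ, ← Set.Iic_union_Ici (a := (0:ℝ))]
      apply HasDerivWithinAt.union
      · -- within Iic 0
        have h1 : HasDerivWithinAt (fun w : ℝ => (max w 0) • J) 0 (Set.Iic 0) 0 := by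
          apply HasDerivWithinAt.congr (hasDerivWithinAt_const 0 _ (0:E))
          · intro w hw
            rw [max_eq_right (show w ≤ (0:ℝ) from hw), zero_smul]
          · norm_num
        have h2 : HasDerivWithinAt (fun w : ℝ => γ w - (max w 0) • J) (vm - 0) (Set.Iic 0) 0 :=
          hvm.sub h1
        rw [sub_zero] at h2
        exact h2
      · -- within Ici 0
        have h1 : HasDerivWithinAt (fun w : ℝ => w • J) J (Set.Ici 0) 0 := by
          simpa using ((hasDerivAt_id (0:ℝ)).smul_const J).hasDerivWithinAt
        have h2 : HasDerivWithinAt (fun w : ℝ => γ w - (max w 0) • J) (vp - J) (Set.Ici 0) 0 := by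
          apply HasDerivWithinAt.congr (hvp.sub h1)
          · intro w hw
            rw [max_eq_left (show (0:ℝ) ≤ w from hw)]; rfl
          · norm_num
        have h3 : vp - J = vm := by rw [hJdef]; abel
        rw [h3] at h2
        exact h2
    · have h1 : HasDerivAt γ (γ' z) z := hγ'1 z hz (ne_of_gt hz0)
      have h2 : HasDerivAt (fun w : ℝ => w • J) J z := by
        simpa using (hasDerivAt_id z).smul_const J
      have hev : Γf =ᶠ[nhds z] (fun w => γ w - w • J) := by
        filter_upwards [Ioi_mem_nhds hz0] with w hw
        simp only [hΓfdef, max_eq_left (le_of_lt (show (0:ℝ) < w from hw))]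
      have : HasDerivAt Γf (γ' z - J) z := (h1.sub h2).congr_of_eventuallyEq hev
      simpa only [hΓddef, if_pos (le_of_lt hz0)] using this
  -- continuity of Γd on I2
  have hΓdcont : ∀ z ∈ I2, ContinuousAt Γd z := by
    intro z hz
    rcases lt_trichotomy z 0 with hz0 | hz0 | hz0
    · have h1 : ContinuousAt γ' z := (hγ''1 z hz (ne_of_lt hz0)).continuousAt
      have hev : Γd =ᶠ[nhds z] γ' := by
        filter_upwards [Iio_mem_nhds hz0] with w hw
        simp only [hΓddef, if_neg (not_le.2 (show w < 0 from hw)), sub_zero]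
      exact h1.congr hev.symm
    · subst hz0
      have htend : Filter.Tendsto (fun w => Γd w - Γd 0) (nhds 0) (nhds 0) := by
        apply squeeze_zero_norm' (a := fun w : ℝ => M₂ * |w|)
        · filter_upwards [Ioo_mem_nhds hz.1 hz.2] with w hw
          simpa using hLipΓ w hw 0 hz
        · have : Filter.Tendsto (fun w : ℝ => M₂ * |w|) (nhds 0) (nhds (M₂ * |(0:ℝ)|)) :=
            tendsto_const_nhds.mul (continuous_abs.tendsto 0)
          simpa using this
      have : Filter.Tendsto Γd (nhds 0) (nhds (Γd 0)) := by
        have := htend.add_const (Γd 0)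
        simpa using this
      exact this
    · have h1 : ContinuousAt γ' z := (hγ''1 z hz (ne_of_gt hz0)).continuousAt
      have hev : Γd =ᶠ[nhds z] (fun w => γ' w - J) := by
        filter_upwards [Ioi_mem_nhds hz0] with w hw
        simp only [hΓddef, if_pos (le_of_lt (show (0:ℝ) < w from hw))]
      exact ((h1.sub continuousAt_const)).congr hev.symm
  -- geometry of the various intervals
  set V : Set ℝ := Set.Ioo (-(δ/2)) (δ/2) with hVdef
  have hVI2 : V ⊆ I2 := by
    intro z hz
    constructor
    · have : -(2*ε) ≤ -(δ/2) := by linarith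
      linarith [hz.1]
    · have : δ/2 ≤ 2*ε := by linarith
      linarith [hz.2]
  have hreach : ∀ x : ℝ, |x| ≤ δ/3 → ∀ u : ℝ, |u| ≤ 2 → x - c*u ∈ V := by
    intro x hx u hu
    have h1 : |x - c*u| ≤ |x| + c * |u| := by
      calc |x - c*u| ≤ |x| + |c*u| := abs_sub _ _
        _ = |x| + c * |u| := by rw [abs_mul, abs_of_pos hc0]
    have h2 : |x - c*u| < δ/2 := by
      have : c * |u| ≤ c * 2 := mul_le_mul_of_nonneg_left hu hc0.le
      nlinarith
    exact abs_lt.1 h2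
  have hballabs : ∀ s : ℝ, |s| < δ/4 → ∀ x ∈ Metric.ball s (δ/100), |x| ≤ δ/3 := by
    intro s hs x hx
    rw [Metric.mem_ball, Real.dist_eq] at hx
    calc |x| = |(x - s) + s| := by ring_nf
      _ ≤ |x - s| + |s| := abs_add_le _ _
      _ ≤ δ/3 := by linarith
  have htU : |t| < δ/4 := lt_of_le_of_lt ht (by rw [hcdef]; nlinarith)
  -- φ basics
  have hφc : Continuous φ := hφsm.continuous
  have hφInt : Integrable φ := by
    refine hφc.integrable_of_hasCompactSupport ?_
    exact HasCompactSupport.intro (K := Set.Icc (-1) 1) isCompact_Icc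
      (fun u hu => by by_contra hne; exact hu (hφsupp hne))
  have hsupp1 : ∀ u : ℝ, φ u ≠ 0 → |u| ≤ 2 := by
    intro u hu
    have := hφsupp hu
    rw [Set.mem_Icc] at this
    have := abs_le.2 this
    linarith
  -- continuity of the integrands
  have hΓfcont : ∀ z ∈ I2, ContinuousAt Γf z := by
    intro z hz
    have h1 : ContinuousAt γ z := hγcont.continuousAt (isOpen_Ioo.mem_nhds hz)
    have h2 : ContinuousAt (fun w : ℝ => (max w 0) • J) z :=
      ((continuous_id.max continuous_const).smul continuous_const).continuousAt
    exact h1.sub h2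
  -- derivative of Γd away from 0
  have hΓdD : ∀ z ∈ I2, z ≠ 0 → HasDerivAt Γd (γ'' z) z := by
    intro z hz hzne
    rcases lt_or_gt_of_ne hzne with hz0 | hz0
    · have hev : Γd =ᶠ[nhds z] γ' := by
        filter_upwards [Iio_mem_nhds hz0] with w hw
        simp only [hΓddef, if_neg (not_le.2 (show w < 0 from hw)), sub_zero]
      exact (hγ''1 z hz hzne).congr_of_eventuallyEq hev
    · have hev : Γd =ᶠ[nhds z] (fun w => γ' w - J) := by
        filter_upwards [Ioi_mem_nhds hz0] with w hw
        simp only [hΓddef, if_pos (le_of_lt (show (0:ℝ) < w from hw))]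
      exact ((hγ''1 z hz hzne).sub_const J).congr_of_eventuallyEq hev
  -- value of sigmaDel on U
  have hσδ : ∀ s : ℝ, |s| < δ/4 → sigmaDel σ δ s = c := by
    intro s hs
    have h1 : |s/δ| ≤ 1/4 := by
      rw [abs_div, abs_of_pos hδ0, div_le_iff₀ hδ0]
      linarith
    rw [sigmaDel, hσeq _ h1, hcdef]
    ring
  -- the mollification coincides with the constant-scale convolution near 0
  have hmoll : ∀ s : ℝ, |s| < δ/4 → mollify φ σ δ γ s = ∫ u, φ u • γ (s - c*u) := by
    intro s hs
    rw [mollify, hσδ s hs]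
  -- first dominated differentiation: the straightened part
  have hG : ∀ s : ℝ, |s| < δ/4 →
      HasDerivAt (fun x => ∫ u, φ u • Γf (x - c*u)) (∫ u, φ u • Γd (s - c*u)) s := by
    intro s hs
    set K : ℝ := ‖vm‖ + M₂ with hKdef
    have hK0 : 0 ≤ K := add_nonneg (norm_nonneg _) hM0
    -- bound on Γd on V
    have hΓdK : ∀ z ∈ V, ‖Γd z‖ ≤ K := by
      intro z hz
      have hzI2 := hVI2 hz
      have hzabs : |z| ≤ 1 := by
        rw [abs_le]
        constructor
        · linarith [hz.1]
        · linarith [hz.2]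
      rcases lt_or_ge z 0 with hz0 | hz0
      · have h1 := hLm z ⟨hzI2.1, hz0⟩
        have : Γd z = (γ' z - vm) + vm := by
          simp only [hΓddef, if_neg (not_le.2 hz0), sub_zero]; abel
        rw [this]
        calc ‖(γ' z - vm) + vm‖ ≤ ‖γ' z - vm‖ + ‖vm‖ := norm_add_le _ _
          _ ≤ M₂ * |z| + ‖vm‖ := by linarith
          _ ≤ K := by rw [hKdef]; nlinarith [abs_nonneg z]
      · have h1 := hR z ⟨hz0, hzI2.2⟩
        have : Γd z = (γ' z - vp) + vm := by
          simp only [hΓddef, if_pos hz0, hJdef]; abel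
        rw [this]
        calc ‖(γ' z - vp) + vm‖ ≤ ‖γ' z - vp‖ + ‖vm‖ := norm_add_le _ _
          _ ≤ M₂ * |z| + ‖vm‖ := by linarith
          _ ≤ K := by rw [hKdef]; nlinarith [abs_nonneg z]
    -- Γf is K-Lipschitz on V
    have hLipΓf : ∀ x ∈ V, ∀ y ∈ V, ‖Γf x - Γf y‖ ≤ K * |x - y| := by
      have hlip : LipschitzOnWith K.toNNReal Γf V := by
        apply (convex_Ioo _ _).lipschitzOnWith_of_nnnorm_hasDerivWithin_le (f' := Γd)
        · intro z hz
          exact (hΓderiv z (hVI2 hz)).hasDerivWithinAt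
        · intro z hz
          rw [← NNReal.coe_le_coe, coe_nnnorm, Real.coe_toNNReal _ hK0]
          exact hΓdK z hz
      intro x hx y hy
      have := (lipschitzOnWith_iff_dist_le_mul.1 hlip) x hx y hy
      rwa [dist_eq_norm, Real.dist_eq, Real.coe_toNNReal _ hK0] at this
    have key := hasDerivAt_integral_of_dominated_loc_of_lip
      (F := fun x u => φ u • Γf (x - c*u)) (F' := fun u => φ u • Γd (s - c*u))
      (x₀ := s) (bound := fun u => φ u * K) (s := Metric.ball s (δ/100))
      (μ := volume) (Metric.ball_mem_nhds _ (by positivity)) ?_ ?_ ?_ ?_ ?_ ?_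
    · exact key.2
    · -- measurability near s
      filter_upwards [Metric.ball_mem_nhds s (show (0:ℝ) < δ/100 by positivity)] with x hx
      refine (aux_cont_integrand φ hφc hφsupp Γf c x ?_).aestronglyMeasurable
      intro u hu
      exact hΓfcont _ (hVI2 (hreach x (hballabs s hs x hx) u hu))
    · -- integrability at s
      refine aux_integrable φ hφc hφsupp Γf c s ?_
      intro u hu
      refine hΓfcont _ (hVI2 (hreach s ?_ u hu))
      calc |s| ≤ δ/4 := le_of_lt hs
        _ ≤ δ/3 := by linarith
    · -- measurability of the candidate derivative
      refine (aux_cont_integrand φ hφc hφsupp Γd c s ?_).aestronglyMeasurable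
      intro u hu
      refine hΓdcont _ (hVI2 (hreach s ?_ u hu))
      calc |s| ≤ δ/4 := le_of_lt hs
        _ ≤ δ/3 := by linarith
    · -- Lipschitz bound
      refine Filter.Eventually.of_forall (fun u => ?_)
      rw [lipschitzOnWith_iff_dist_le_mul]
      intro x hx y hy
      rcases eq_or_ne (φ u) 0 with hu | hu
      · simp [hu, dist_self]
      · have hu2 := hsupp1 u hu
        have hxV := hreach x (hballabs s hs x hx) u hu2
        have hyV := hreach y (hballabs s hs y hy) u hu2
        rw [dist_eq_norm, ← smul_sub, norm_smul, Real.norm_eq_abs, Real.dist_eq,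
          Real.coe_nnabs, abs_of_nonneg (mul_nonneg (hφ0 u) hK0),
          abs_of_nonneg (hφ0 u)]
        have h1 : ‖Γf (x - c*u) - Γf (y - c*u)‖ ≤ K * |x - y| := by
          have := hLipΓf _ hxV _ hyV
          have heq : (x - c*u) - (y - c*u) = x - y := by ring
          rwa [heq] at this
        calc φ u * ‖Γf (x - c*u) - Γf (y - c*u)‖ ≤ φ u * (K * |x - y|) :=
              mul_le_mul_of_nonneg_left h1 (hφ0 u)
          _ = φ u * K * |x - y| := by ring
    · exact (hφInt.mul_const K)
    · -- differentiability of the integrand at s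
      refine Filter.Eventually.of_forall (fun u => ?_)
      rcases eq_or_ne (φ u) 0 with hu | hu
      · simpa [hu] using hasDerivAt_const s (0:E)
      · have hu2 := hsupp1 u hu
        have hzV : s - c*u ∈ V := by
          refine hreach s ?_ u hu2
          calc |s| ≤ δ/4 := le_of_lt hs
            _ ≤ δ/3 := by linarith
        have hinner : HasDerivAt (fun x : ℝ => x - c*u) 1 s := by
          simpa using (hasDerivAt_id s).sub_const (c*u)
        have houter : HasDerivAt Γf (Γd (s - c*u)) (s - c*u) := hΓderiv _ (hVI2 hzV)
        have := (houter.scomp (x := s) hinner).const_smul (φ u)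
        simp at this; exact this
  -- first dominated differentiation: the kink part
  have hp : ∀ s : ℝ, |s| < δ/4 →
      HasDerivAt (fun x => ∫ u, φ u * max (x - c*u) 0) (∫ u in Set.Iio (s/c), φ u) s := by
    intro s hs
    have hae : ∀ᵐ u : ℝ, u ≠ s/c := by
      rw [ae_iff]
      have : {u : ℝ | ¬ u ≠ s/c} = {s/c} := by ext u; simp
      rw [this]
      exact measure_singleton _
    have key := hasDerivAt_integral_of_dominated_loc_of_lip
      (F := fun x u => φ u * max (x - c*u) 0)
      (F' := Set.indicator (Set.Iio (s/c)) φ)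
      (x₀ := s) (bound := fun u => φ u) (s := Metric.ball s (δ/100))
      (μ := volume) (Metric.ball_mem_nhds _ (by positivity)) ?_ ?_ ?_ ?_ ?_ ?_
    · have heq : ∫ u, Set.indicator (Set.Iio (s/c)) φ u = ∫ u in Set.Iio (s/c), φ u :=
        integral_indicator measurableSet_Iio
      rw [← heq]
      exact key.2
    · refine Filter.Eventually.of_forall (fun x => ?_)
      exact (hφc.mul (((continuous_const.sub (continuous_const.mul continuous_id)).max
        continuous_const))).aestronglyMeasurable
    · have := aux_integrable (E := ℝ) φ hφc hφsupp (fun z => max z 0) c s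
        (fun u _ => (continuous_id.max continuous_const).continuousAt)
      simpa [smul_eq_mul] using this
    · exact (hφc.measurable.indicator measurableSet_Iio).aestronglyMeasurable
    · refine Filter.Eventually.of_forall (fun u => ?_)
      rw [lipschitzOnWith_iff_dist_le_mul]
      intro x hx y hy
      rw [Real.dist_eq, Real.dist_eq, Real.coe_nnabs, abs_of_nonneg (hφ0 u),
        ← mul_sub, abs_mul, abs_of_nonneg (hφ0 u)]
      have h1 : |max (x - c*u) 0 - max (y - c*u) 0| ≤ |x - y| := by
        have := abs_max_sub_max_le_abs (x - c*u) (y - c*u) 0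
        have heq : (x - c*u) - (y - c*u) = x - y := by ring
        rwa [heq] at this
      exact mul_le_mul_of_nonneg_left h1 (hφ0 u)
    · exact hφInt
    · filter_upwards [hae] with u hu
      rcases lt_or_gt_of_ne hu with hlt | hgt
      · -- u < s/c, so c*u < s and the max is eventually x - c*u
        have hcu : c*u < s := by
          rw [← lt_div_iff₀' hc0]
          exact hlt
        have hev : (fun x : ℝ => φ u * (x - c*u)) =ᶠ[nhds s]
            (fun x => φ u * max (x - c*u) 0) := by
          filter_upwards [Ioi_mem_nhds hcu] with x hx
          rw [max_eq_left (by linarith [show c*u < x from hx] : (0:ℝ) ≤ x - c*u)]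
        have h1 : HasDerivAt (fun x : ℝ => φ u * (x - c*u)) (φ u) s := by
          simpa using ((hasDerivAt_id s).sub_const (c*u)).const_mul (φ u)
        have h2 := h1.congr_of_eventuallyEq hev.symm
        have hval : Set.indicator (Set.Iio (s/c)) φ u = φ u :=
          Set.indicator_of_mem (show u ∈ Set.Iio (s/c) from hlt) φ
        rwa [hval]
      · -- u > s/c, so s < c*u and the max is eventually 0
        have hcu : s < c*u := by
          rw [← div_lt_iff₀' hc0]
          exact hgt
        have hev : (fun _ : ℝ => φ u * 0) =ᶠ[nhds s]
            (fun x => φ u * max (x - c*u) 0) := by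
          filter_upwards [Iio_mem_nhds hcu] with x hx
          rw [max_eq_right (by linarith [show x < c*u from hx] : x - c*u ≤ (0:ℝ))]
        have h1 : HasDerivAt (fun _ : ℝ => φ u * 0) 0 s := hasDerivAt_const _ _
        have h2 := h1.congr_of_eventuallyEq hev.symm
        have hval : Set.indicator (Set.Iio (s/c)) φ u = 0 :=
          Set.indicator_of_notMem (by simp only [Set.mem_Iio, not_lt]; exact hgt.le) φ
        rwa [hval]
  -- derivative of the primitive of φ
  have hΦd : ∀ a : ℝ, HasDerivAt (fun a : ℝ => ∫ u in Set.Iio a, φ u) (φ a) a := by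
    intro a
    have hint : ∀ b : ℝ, IntegrableOn φ (Set.Iic b) := fun b => hφInt.integrableOn
    have heq : ∀ b : ℝ, (∫ u in Set.Iio b, φ u)
        = (∫ u in Set.Iic (-2:ℝ), φ u) + ∫ u in (-2:ℝ)..b, φ u := by
      intro b
      rw [← integral_Iic_eq_integral_Iio, ← intervalIntegral.integral_Iic_sub_Iic (hint (-2)) (hint b)]
      ring
    have h1 : HasDerivAt (fun b : ℝ => ∫ u in (-2:ℝ)..b, φ u) (φ a) a :=
      intervalIntegral.integral_hasDerivAt_right hφInt.intervalIntegrable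
        hφc.stronglyMeasurable.stronglyMeasurableAtFilter hφc.continuousAt
    have h2 := h1.const_add (∫ u in Set.Iic (-2:ℝ), φ u)
    apply h2.congr_of_eventuallyEq
    exact Filter.Eventually.of_forall heq
  -- second dominated differentiation
  have ht3 : |t| ≤ δ/3 := by
    calc |t| ≤ δ/4 := le_of_lt htU
      _ ≤ δ/3 := by linarith
  have hG2 : HasDerivAt (fun x => ∫ u, φ u • Γd (x - c*u))
      (∫ u, φ u • deriv Γd (t - c*u)) t := by
    have hae : ∀ᵐ u : ℝ, u ≠ t/c := by
      rw [ae_iff]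
      have : {u : ℝ | ¬ u ≠ t/c} = {t/c} := by ext u; simp
      rw [this]
      exact measure_singleton _
    have key := hasDerivAt_integral_of_dominated_loc_of_lip
      (F := fun x u => φ u • Γd (x - c*u)) (F' := fun u => φ u • deriv Γd (t - c*u))
      (x₀ := t) (bound := fun u => φ u * M₂) (s := Metric.ball t (δ/100))
      (μ := volume) (Metric.ball_mem_nhds _ (by positivity)) ?_ ?_ ?_ ?_ ?_ ?_
    · exact key.2
    · filter_upwards [Metric.ball_mem_nhds t (show (0:ℝ) < δ/100 by positivity)] with x hx
      refine (aux_cont_integrand φ hφc hφsupp Γd c x ?_).aestronglyMeasurable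
      intro u hu
      exact hΓdcont _ (hVI2 (hreach x (hballabs t htU x hx) u hu))
    · refine aux_integrable φ hφc hφsupp Γd c t ?_
      intro u hu
      exact hΓdcont _ (hVI2 (hreach t ht3 u hu))
    · exact hφc.aestronglyMeasurable.smul
        (((stronglyMeasurable_deriv Γd).comp_measurable
          (measurable_const.sub (measurable_id.const_mul c))).aestronglyMeasurable)
    · refine Filter.Eventually.of_forall (fun u => ?_)
      rw [lipschitzOnWith_iff_dist_le_mul]
      intro x hx y hy
      rcases eq_or_ne (φ u) 0 with hu | hu
      · simp [hu, dist_self]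
      · have hu2 := hsupp1 u hu
        have hxV := hreach x (hballabs t htU x hx) u hu2
        have hyV := hreach y (hballabs t htU y hy) u hu2
        rw [dist_eq_norm, ← smul_sub, norm_smul, Real.norm_eq_abs, Real.dist_eq,
          Real.coe_nnabs, abs_of_nonneg (mul_nonneg (hφ0 u) hM0),
          abs_of_nonneg (hφ0 u)]
        have h1 : ‖Γd (x - c*u) - Γd (y - c*u)‖ ≤ M₂ * |x - y| := by
          have := hLipΓ _ (hVI2 hxV) _ (hVI2 hyV)
          have heq : (x - c*u) - (y - c*u) = x - y := by ring
          rwa [heq] at this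
        calc φ u * ‖Γd (x - c*u) - Γd (y - c*u)‖ ≤ φ u * (M₂ * |x - y|) :=
              mul_le_mul_of_nonneg_left h1 (hφ0 u)
          _ = φ u * M₂ * |x - y| := by ring
    · exact hφInt.mul_const M₂
    · filter_upwards [hae] with u hu
      rcases eq_or_ne (φ u) 0 with hu0 | hu0
      · simpa [hu0] using hasDerivAt_const t (0:E)
      · have hu2 := hsupp1 u hu0
        have hzV : t - c*u ∈ V := hreach t ht3 u hu2
        have hzne : t - c*u ≠ 0 := by
          intro hzero
          apply hu
          field_simp at hzero ⊢
          linarith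
        have houter : HasDerivAt Γd (γ'' (t - c*u)) (t - c*u) := hΓdD _ (hVI2 hzV) hzne
        have hderiv_eq : deriv Γd (t - c*u) = γ'' (t - c*u) := houter.deriv
        have hinner : HasDerivAt (fun x : ℝ => x - c*u) 1 t := by
          simpa using (hasDerivAt_id t).sub_const (c*u)
        have := (houter.scomp (x := t) hinner).const_smul (φ u)
        rw [hderiv_eq]
        simp at this; exact this
  -- assembling the derivative of the mollification
  have hUopen : IsOpen {s : ℝ | |s| < δ/4} := by
    have : {s : ℝ | |s| < δ/4} = Metric.ball (0:ℝ) (δ/4) := by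
      ext s; simp [Real.dist_eq]
    rw [this]; exact Metric.isOpen_ball
  have hsplit : ∀ x : ℝ, |x| < δ/4 → (∫ u, φ u • γ (x - c*u))
      = (∫ u, φ u • Γf (x - c*u)) + (∫ u, φ u * max (x - c*u) 0) • J := by
    intro x hx
    have hx3 : |x| ≤ δ/3 := by
      calc |x| ≤ δ/4 := le_of_lt hx
        _ ≤ δ/3 := by linarith
    have h1 : Integrable (fun u => φ u • Γf (x - c*u)) :=
      aux_integrable φ hφc hφsupp Γf c x
        (fun u hu => hΓfcont _ (hVI2 (hreach x hx3 u hu)))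
    have h2 : Integrable (fun u => φ u • ((max (x - c*u) 0) • J)) :=
      aux_integrable φ hφc hφsupp (fun z => (max z 0) • J) c x
        (fun u hu => ((continuous_id.max continuous_const).smul continuous_const).continuousAt)
    have heq : (fun u => φ u • γ (x - c*u))
        = fun u => φ u • Γf (x - c*u) + φ u • ((max (x - c*u) 0) • J) := by
      funext u
      rw [← smul_add]
      congr 1
      simp only [hΓfdef]
      abel
    rw [heq, integral_add h1 h2]
    congr 1
    have heq2 : (fun u => φ u • ((max (x - c*u) 0) • J))
        = fun u => (φ u * max (x - c*u) 0) • J := by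
      funext u
      rw [smul_smul]
    rw [heq2, integral_smul_const]
  have hA : ∀ s : ℝ, |s| < δ/4 → HasDerivAt (mollify φ σ δ γ)
      ((∫ u, φ u • Γd (s - c*u)) + (∫ u in Set.Iio (s/c), φ u) • J) s := by
    intro s hs
    have h1 := (hG s hs).add ((hp s hs).smul_const J)
    apply h1.congr_of_eventuallyEq
    filter_upwards [hUopen.mem_nhds hs] with x hx
    rw [hmoll x hx, hsplit x hx]; rfl
  have hd1 : deriv (mollify φ σ δ γ) =ᶠ[nhds t]
      (fun s => (∫ u, φ u • Γd (s - c*u)) + (∫ u in Set.Iio (s/c), φ u) • J) := by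
    filter_upwards [hUopen.mem_nhds htU] with s hs
    exact (hA s hs).deriv
  have hd2 : deriv (deriv (mollify φ σ δ γ)) t
      = deriv (fun s => (∫ u, φ u • Γd (s - c*u)) + (∫ u in Set.Iio (s/c), φ u) • J) t :=
    hd1.deriv_eq
  have hB : HasDerivAt
      (fun s => (∫ u, φ u • Γd (s - c*u)) + (∫ u in Set.Iio (s/c), φ u) • J)
      ((∫ u, φ u • deriv Γd (t - c*u)) + ((1/c) • φ (t/c)) • J) t := by
    refine hG2.add ?_
    have hinner : HasDerivAt (fun s : ℝ => s/c) (1/c) t := by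
      simpa using (hasDerivAt_id t).div_const c
    have h1 := (hΦd (t/c)).scomp (x := t) hinner
    exact h1.smul_const J
  rw [hd2, hB.deriv]
  have hcoef : ((1/c) • φ (t/c)) = (100/δ^2) * φ (100 * t/δ^2) := by
    have h1 : t/c = 100 * t/δ^2 := by
      rw [hcdef]
      field_simp
    have h2 : (1:ℝ)/c = 100/δ^2 := by
      rw [hcdef]
      field_simp
    rw [smul_eq_mul, h1, h2]
  rw [hcoef, add_sub_cancel_right]
  -- final estimate
  have hbound : ∀ᵐ u : ℝ, ‖φ u • deriv Γd (t - c*u)‖ ≤ φ u * M₂ := by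
    have hae : ∀ᵐ u : ℝ, u ≠ t/c := by
      rw [ae_iff]
      have : {u : ℝ | ¬ u ≠ t/c} = {t/c} := by ext u; simp
      rw [this]
      exact measure_singleton _
    filter_upwards [hae] with u hu
    rcases eq_or_ne (φ u) 0 with hu0 | hu0
    · simp [hu0]
    · have hu2 := hsupp1 u hu0
      have hzV : t - c*u ∈ V := hreach t ht3 u hu2
      have hzne : t - c*u ≠ 0 := by
        intro hzero
        apply hu
        field_simp at hzero ⊢
        linarith
      have hderiv_eq : deriv Γd (t - c*u) = γ'' (t - c*u) := (hΓdD _ (hVI2 hzV) hzne).deriv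
      rw [norm_smul, Real.norm_eq_abs, abs_of_nonneg (hφ0 u), hderiv_eq]
      exact mul_le_mul_of_nonneg_left (hbd _ (hVI2 hzV) hzne) (hφ0 u)
  calc ‖∫ u, φ u • deriv Γd (t - c*u)‖ ≤ ∫ u, φ u * M₂ :=
        norm_integral_le_of_norm_le (hφInt.mul_const M₂) hbound
    _ = (∫ u, φ u) * M₂ := by rw [integral_mul_const]
    _ = M₂ := by rw [hφint, one_mul]
end

section
/- Let γ: (-2ε,2ε) → E be piecewise C² (with corner at 0), set M₁ = sup_{u ∈ (-2ε,2ε) \ {0}} ‖γ′(u)‖ and M₂ = sup_{u ∈ (-2ε,2ε) \ {0}} ‖γ″(u)‖ (both assumed finite), and set S₁ = sup_ℝ |σ′| and S₂ = sup_ℝ |σ″|. Then for every δ ∈ (0,ε] and every t ∈ (-ε,ε) with |t| > δ²/100, ‖γ_δ″(t)‖ ≤ (1 + δ·S₁)²·M₂ + S₂·M₁; i.e., away from the interval [-δ²/100, δ²/100] the second derivatives of the mollified paths are bounded by a constant independent of δ. -/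
open MeasureTheory Set

theorem mollify_second_deriv_bound_away_from_corner
    {E : Type*} [NormedAddCommGroup E] [NormedSpace ℝ E] [CompleteSpace E]
    (ε : ℝ) (hε0 : 0 < ε) (hε1 : ε ≤ 1)
    (φ σ : ℝ → ℝ)
    (hφsm : ContDiff ℝ (⊤ : ℕ∞) φ) (hφsupp : Function.support φ ⊆ Set.Icc (-1) 1)
    (hφ0 : ∀ t, 0 ≤ φ t) (hφ1 : ∀ t, φ t ≤ 1) (hφint : (∫ t : ℝ, φ t) = 1)
    (hσsm : ContDiff ℝ (⊤ : ℕ∞) σ) (hσsupp : Function.support σ ⊆ Set.Icc (-(1/2)) (1/2))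
    (hσ0 : ∀ t, 0 ≤ σ t) (hσle : ∀ t, σ t ≤ 1/100)
    (hσeq : ∀ t : ℝ, |t| ≤ 1/4 → σ t = 1/100)
    (hσpos : ∀ t : ℝ, 1/4 < |t| → |t| < 1/2 → 0 < σ t)
    (γ : ℝ → E)
    (hγcont : ContinuousOn γ (Set.Ioo (-(2*ε)) (2*ε)))
    (hγm : ContDiffOn ℝ 2 γ (Set.Ioc (-(2*ε)) 0))
    (hγp : ContDiffOn ℝ 2 γ (Set.Ico 0 (2*ε)))
    (γ' : ℝ → E)
    (hγ'1 : ∀ u ∈ Set.Ioo (-(2*ε)) (2*ε), u ≠ 0 → HasDerivAt γ (γ' u) u)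
    (hγ'0 : HasDerivWithinAt γ (γ' 0) (Set.Ici 0) 0)
    (γ'' : ℝ → E)
    (hγ''1 : ∀ u ∈ Set.Ioo (-(2*ε)) (2*ε), u ≠ 0 → HasDerivAt γ' (γ'' u) u)
    (hγ''0 : HasDerivWithinAt γ' (γ'' 0) (Set.Ici 0) 0)
    (M₁ M₂ S₁ S₂ : ℝ)
    (hM₁ : M₁ = sSup ((fun u => ‖γ' u‖) '' (Set.Ioo (-(2*ε)) (2*ε) \ {0})))
    (hM₁bd : BddAbove ((fun u => ‖γ' u‖) '' (Set.Ioo (-(2*ε)) (2*ε) \ {0})))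
    (hM₂ : M₂ = sSup ((fun u => ‖γ'' u‖) '' (Set.Ioo (-(2*ε)) (2*ε) \ {0})))
    (hM₂bd : BddAbove ((fun u => ‖γ'' u‖) '' (Set.Ioo (-(2*ε)) (2*ε) \ {0})))
    (hS₁ : S₁ = ⨆ u : ℝ, |deriv σ u|)
    (hS₂ : S₂ = ⨆ u : ℝ, |deriv (deriv σ) u|)
    (δ : ℝ) (hδ0 : 0 < δ) (hδε : δ ≤ ε)
 :
    ∀ t ∈ Set.Ioo (-ε) ε, δ^2/100 < |t| →
      ‖deriv (deriv (mollify φ σ δ γ)) t‖ ≤ (1 + δ * S₁)^2 * M₂ + S₂ * M₁ := by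
  intro t ht htabs
  have hδne : δ ≠ 0 := ne_of_gt hδ0
  have hc0 : (0:ℝ) < δ^2/100 := by positivity
  have hcε : δ^2/100 < ε := by
    have h1 : δ^2 ≤ ε^2 := by nlinarith
    have h2 : ε^2 ≤ ε := by nlinarith
    linarith
  have hle_top : (1:WithTop ℕ∞) ≤ ((⊤:ℕ∞) : WithTop ℕ∞) := by exact_mod_cast le_top
  -- σ facts
  have hσd1 : ContDiff ℝ (⊤:ℕ∞) (deriv σ) := (contDiff_infty_iff_deriv.mp hσsm).2
  have hσcs : HasCompactSupport σ := HasCompactSupport.intro isCompact_Icc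
    (fun u hu => by by_contra h; exact hu (hσsupp (Function.mem_support.mpr h)))
  have hS1bdd : BddAbove (Set.range fun u => |deriv σ u|) := by
    obtain ⟨C, hC⟩ := (hσcs.deriv).exists_bound_of_continuous (hσsm.continuous_deriv hle_top)
    exact ⟨C, by rintro x ⟨u, rfl⟩; simpa using hC u⟩
  have hS2bdd : BddAbove (Set.range fun u => |deriv (deriv σ) u|) := by
    obtain ⟨C, hC⟩ := (hσcs.deriv.deriv).exists_bound_of_continuous (hσd1.continuous_deriv hle_top)
    exact ⟨C, by rintro x ⟨u, rfl⟩; simpa using hC u⟩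
  have hS1b : ∀ u, |deriv σ u| ≤ S₁ := fun u => hS₁ ▸ le_ciSup hS1bdd u
  have hS2b : ∀ u, |deriv (deriv σ) u| ≤ S₂ := fun u => hS₂ ▸ le_ciSup hS2bdd u
  have hS10 : 0 ≤ S₁ := le_trans (abs_nonneg _) (hS1b 0)
  have hS20 : 0 ≤ S₂ := le_trans (abs_nonneg _) (hS2b 0)
  have hdiv : ∀ s : ℝ, HasDerivAt (fun x : ℝ => x / δ) (1/δ) s := fun s => by
    simpa using (hasDerivAt_id s).div_const δ
  have hσδ : ∀ s : ℝ, HasDerivAt (fun y => sigmaDel σ δ y) (δ * deriv σ (s/δ)) s := by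
    intro s
    simp only [sigmaDel]
    have h2 : HasDerivAt σ (deriv σ (s/δ)) (s/δ) :=
      ((hσsm.differentiable (by simp)) (s/δ)).hasDerivAt
    have h3 := (h2.comp s (hdiv s)).const_mul (δ^2)
    exact h3.congr_deriv (by field_simp)
  have hdσ : ∀ s : ℝ, HasDerivAt (fun y => δ * deriv σ (y/δ)) (deriv (deriv σ) (s/δ)) s := by
    intro s
    have h2 : HasDerivAt (deriv σ) (deriv (deriv σ) (s/δ)) (s/δ) :=
      ((hσd1.differentiable (by simp)) (s/δ)).hasDerivAt
    have h3 := (h2.comp s (hdiv s)).const_mul δ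
    exact h3.congr_deriv (by field_simp)
  have hσδ0 : ∀ s, 0 ≤ sigmaDel σ δ s := fun s => mul_nonneg (by positivity) (hσ0 _)
  have hσδc : ∀ s, sigmaDel σ δ s ≤ δ^2/100 := by
    intro s
    have := mul_le_mul_of_nonneg_left (hσle (s/δ)) (sq_nonneg δ)
    simp only [sigmaDel]; nlinarith
  have hdσb : ∀ s : ℝ, |δ * deriv σ (s/δ)| ≤ δ * S₁ := by
    intro s
    rw [abs_mul, abs_of_pos hδ0]
    exact mul_le_mul_of_nonneg_left (hS1b _) hδ0.le
  -- γ facts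
  have hder1 : ∀ p : ℝ, p ∈ Set.Ioo (-(2*ε)) (2*ε) → p ≠ 0 → deriv γ p = γ' p :=
    fun p h1 h2 => (hγ'1 p h1 h2).deriv
  have hder2 : ∀ p : ℝ, p ∈ Set.Ioo (-(2*ε)) (2*ε) → p ≠ 0 → deriv γ' p = γ'' p :=
    fun p h1 h2 => (hγ''1 p h1 h2).deriv
  have hM1b : ∀ p : ℝ, p ∈ Set.Ioo (-(2*ε)) (2*ε) → p ≠ 0 → ‖γ' p‖ ≤ M₁ :=
    fun p h1 h2 => hM₁ ▸ le_csSup hM₁bd ⟨p, ⟨h1, by simpa using h2⟩, rfl⟩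
  have hM2b : ∀ p : ℝ, p ∈ Set.Ioo (-(2*ε)) (2*ε) → p ≠ 0 → ‖γ'' p‖ ≤ M₂ :=
    fun p h1 h2 => hM₂ ▸ le_csSup hM₂bd ⟨p, ⟨h1, by simpa using h2⟩, rfl⟩
  have hεmem : ε ∈ Set.Ioo (-(2*ε)) (2*ε) := ⟨by linarith, by linarith⟩
  have hM10 : 0 ≤ M₁ := le_trans (norm_nonneg _) (hM1b ε hεmem (ne_of_gt hε0))
  have hM20 : 0 ≤ M₂ := le_trans (norm_nonneg _) (hM2b ε hεmem (ne_of_gt hε0))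
  have h1S : (0:ℝ) ≤ 1 + δ * S₁ := by nlinarith
  -- the open set U
  set U : Set ℝ := Set.Ioo (-ε) ε ∩ {s : ℝ | δ^2/100 < |s|} with hUdef
  have hUopen : IsOpen U := isOpen_Ioo.inter (isOpen_lt continuous_const continuous_abs)
  have htU : t ∈ U := ⟨ht, htabs⟩
  have hUabs : ∀ x ∈ U, |x| < ε := fun x hx => abs_lt.mpr ⟨hx.1.1, hx.1.2⟩
  have hq : ∀ x u : ℝ, |u| ≤ 1 → |sigmaDel σ δ x * u| ≤ δ^2/100 := by
    intro x u hu
    rw [abs_mul, abs_of_nonneg (hσδ0 x)]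
    calc sigmaDel σ δ x * |u| ≤ (δ^2/100) * 1 :=
          mul_le_mul (hσδc x) hu (abs_nonneg u) hc0.le
      _ = δ^2/100 := mul_one _
  have hptIoo : ∀ x ∈ U, ∀ u : ℝ, |u| ≤ 1 →
      (x - sigmaDel σ δ x * u) ∈ Set.Ioo (-(2*ε)) (2*ε) := by
    intro x hx u hu
    obtain ⟨ha, hb⟩ := abs_le.mp (hq x u hu)
    obtain ⟨hc1, hc2⟩ := abs_lt.mp (hUabs x hx)
    exact ⟨by linarith, by linarith⟩
  have hptne : ∀ x ∈ U, ∀ u : ℝ, |u| ≤ 1 → (x - sigmaDel σ δ x * u) ≠ 0 := by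
    intro x hx u hu h
    have h1 := hq x u hu
    have hx2 : δ^2/100 < |x| := hx.2
    have hxe : x = sigmaDel σ δ x * u := by linarith [sub_eq_zero.mp h]
    rw [← hxe] at h1
    linarith
  -- φ facts
  have hφcont : Continuous φ := hφsm.continuous
  have hφz : ∀ u : ℝ, u ∉ Set.Icc (-1:ℝ) 1 → φ u = 0 := fun u hu => by
    by_contra h; exact hu (hφsupp (Function.mem_support.mpr h))
  have hsupp1 : ∀ u : ℝ, φ u ≠ 0 → |u| ≤ 1 := by
    intro u h
    have := hφsupp (Function.mem_support.mpr h)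
    exact abs_le.mpr ⟨this.1, this.2⟩
  have hφz1 : ∀ u : ℝ, 1 < |u| → φ u = 0 := by
    intro u hu
    by_contra h
    exact absurd (hsupp1 u h) (not_le.mpr hu)
  have hφcs : HasCompactSupport φ := HasCompactSupport.intro isCompact_Icc hφz
  have hφInt : Integrable φ := hφcont.integrable_of_hasCompactSupport hφcs
  -- measurability
  have hsmγ : StronglyMeasurable (deriv γ) := stronglyMeasurable_deriv γ
  have hsmγ' : StronglyMeasurable (deriv γ') := stronglyMeasurable_deriv γ'
  have hmeasInner : ∀ x : ℝ, Measurable (fun u : ℝ => x - sigmaDel σ δ x * u) :=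
    fun x => (continuous_const.sub (continuous_const.mul continuous_id)).measurable
  have hmF1 : ∀ x : ℝ, AEStronglyMeasurable
      (fun u : ℝ => φ u • ((1 - δ * deriv σ (x/δ) * u) •
        deriv γ (x - sigmaDel σ δ x * u))) volume := by
    intro x
    have c1 : StronglyMeasurable (fun u : ℝ => 1 - δ * deriv σ (x/δ) * u) :=
      (continuous_const.sub (continuous_const.mul continuous_id)).stronglyMeasurable
    have m1 : StronglyMeasurable (fun u : ℝ => deriv γ (x - sigmaDel σ δ x * u)) :=
      hsmγ.comp_measurable (hmeasInner x)
    exact (hφcont.stronglyMeasurable.smul (c1.smul m1)).aestronglyMeasurable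
  have hmF2 : ∀ x : ℝ, AEStronglyMeasurable
      (fun u : ℝ => φ u • ((1 - δ * deriv σ (x/δ) * u) •
          ((1 - δ * deriv σ (x/δ) * u) • deriv γ' (x - sigmaDel σ δ x * u)) +
          (0 - deriv (deriv σ) (x/δ) * u) • deriv γ (x - sigmaDel σ δ x * u))) volume := by
    intro x
    have c1 : StronglyMeasurable (fun u : ℝ => 1 - δ * deriv σ (x/δ) * u) :=
      (continuous_const.sub (continuous_const.mul continuous_id)).stronglyMeasurable
    have c2 : StronglyMeasurable (fun u : ℝ => 0 - deriv (deriv σ) (x/δ) * u) :=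
      (continuous_const.sub (continuous_const.mul continuous_id)).stronglyMeasurable
    have m1 : StronglyMeasurable (fun u : ℝ => deriv γ (x - sigmaDel σ δ x * u)) :=
      hsmγ.comp_measurable (hmeasInner x)
    have m2 : StronglyMeasurable (fun u : ℝ => deriv γ' (x - sigmaDel σ δ x * u)) :=
      hsmγ'.comp_measurable (hmeasInner x)
    exact (hφcont.stronglyMeasurable.smul
      ((c1.smul (c1.smul m2)).add (c2.smul m1))).aestronglyMeasurable
  -- continuity and integrability of F x
  have hcontF : ∀ x : ℝ, |x| < ε →
      Continuous (fun u : ℝ => φ u • γ (x - sigmaDel σ δ x * u)) := by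
    intro x hx
    rw [continuous_iff_continuousAt]
    intro u₀
    by_cases hu : 1 < |u₀|
    · have hopen : IsOpen {u : ℝ | 1 < |u|} := isOpen_lt continuous_const continuous_abs
      exact (continuousAt_const : ContinuousAt (fun _ : ℝ => (0:E)) u₀).congr
        (Filter.eventuallyEq_of_mem (hopen.mem_nhds hu)
          (fun u hu' => by simp [hφz1 u hu']))
    · push_neg at hu
      have hin : (x - sigmaDel σ δ x * u₀) ∈ Set.Ioo (-(2*ε)) (2*ε) := by
        obtain ⟨ha, hb⟩ := abs_le.mp (hq x u₀ hu)
        obtain ⟨hc1, hc2⟩ := abs_lt.mp hx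
        exact ⟨by linarith, by linarith⟩
      have hinner : ContinuousAt (fun u : ℝ => x - sigmaDel σ δ x * u) u₀ :=
        (continuous_const.sub (continuous_const.mul continuous_id)).continuousAt
      have hγat : ContinuousAt γ (x - sigmaDel σ δ x * u₀) :=
        hγcont.continuousAt (Ioo_mem_nhds hin.1 hin.2)
      exact hφcont.continuousAt.smul (ContinuousAt.comp (f := fun u : ℝ => x - sigmaDel σ δ x * u) hγat hinner)
  have hintF : ∀ x : ℝ, |x| < ε →
      Integrable (fun u : ℝ => φ u • γ (x - sigmaDel σ δ x * u)) :=
    fun x hx => (hcontF x hx).integrable_of_hasCompactSupport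
      (HasCompactSupport.intro (isCompact_Icc : IsCompact (Set.Icc (-1:ℝ) 1))
        (fun u hu => by simp [hφz u hu]))
  -- pointwise bounds
  have hA : ∀ x u : ℝ, |u| ≤ 1 → |1 - δ * deriv σ (x/δ) * u| ≤ 1 + δ * S₁ := by
    intro x u hu
    have h1 : |δ * deriv σ (x/δ) * u| ≤ δ * S₁ := by
      rw [abs_mul]
      have := mul_le_mul (hdσb x) hu (abs_nonneg u) (mul_nonneg hδ0.le hS10)
      simpa using this
    obtain ⟨ha, hb⟩ := abs_le.mp h1
    exact abs_le.mpr ⟨by linarith, by linarith⟩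
  have hB : ∀ x u : ℝ, |u| ≤ 1 → |0 - deriv (deriv σ) (x/δ) * u| ≤ S₂ := by
    intro x u hu
    rw [zero_sub, abs_neg, abs_mul]
    have := mul_le_mul (hS2b (x/δ)) hu (abs_nonneg u) hS20
    simpa using this
  have hbF1 : ∀ x ∈ U, ∀ u : ℝ,
      ‖φ u • ((1 - δ * deriv σ (x/δ) * u) • deriv γ (x - sigmaDel σ δ x * u))‖
        ≤ φ u * ((1 + δ * S₁) * M₁) := by
    intro x hx u
    by_cases hu : φ u = 0
    · simp [hu]
    · have hu1 : |u| ≤ 1 := hsupp1 u hu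
      have hpI := hptIoo x hx u hu1
      have hpN := hptne x hx u hu1
      rw [hder1 _ hpI hpN, norm_smul, norm_smul, Real.norm_eq_abs, Real.norm_eq_abs,
        abs_of_nonneg (hφ0 u)]
      exact mul_le_mul_of_nonneg_left
        (mul_le_mul (hA x u hu1) (hM1b _ hpI hpN) (norm_nonneg _) h1S) (hφ0 u)
  have hbF2 : ∀ x ∈ U, ∀ u : ℝ,
      ‖φ u • ((1 - δ * deriv σ (x/δ) * u) •
          ((1 - δ * deriv σ (x/δ) * u) • deriv γ' (x - sigmaDel σ δ x * u)) +
          (0 - deriv (deriv σ) (x/δ) * u) • deriv γ (x - sigmaDel σ δ x * u))‖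
        ≤ φ u * ((1 + δ * S₁)^2 * M₂ + S₂ * M₁) := by
    intro x hx u
    by_cases hu : φ u = 0
    · simp [hu]
    · have hu1 : |u| ≤ 1 := hsupp1 u hu
      have hpI := hptIoo x hx u hu1
      have hpN := hptne x hx u hu1
      rw [hder1 _ hpI hpN, hder2 _ hpI hpN, norm_smul, Real.norm_eq_abs,
        abs_of_nonneg (hφ0 u)]
      have k1 : |1 - δ * deriv σ (x/δ) * u| *
          (|1 - δ * deriv σ (x/δ) * u| * ‖γ'' (x - sigmaDel σ δ x * u)‖)
          ≤ (1 + δ * S₁) * ((1 + δ * S₁) * M₂) :=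
        mul_le_mul (hA x u hu1)
          (mul_le_mul (hA x u hu1) (hM2b _ hpI hpN) (norm_nonneg _) h1S)
          (mul_nonneg (abs_nonneg _) (norm_nonneg _)) h1S
      have k2 : |0 - deriv (deriv σ) (x/δ) * u| * ‖γ' (x - sigmaDel σ δ x * u)‖ ≤ S₂ * M₁ :=
        mul_le_mul (hB x u hu1) (hM1b _ hpI hpN) (norm_nonneg _) hS20
      have key : ‖(1 - δ * deriv σ (x/δ) * u) •
          ((1 - δ * deriv σ (x/δ) * u) • γ'' (x - sigmaDel σ δ x * u)) +
          (0 - deriv (deriv σ) (x/δ) * u) • γ' (x - sigmaDel σ δ x * u)‖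
          ≤ (1 + δ * S₁)^2 * M₂ + S₂ * M₁ := by
        calc ‖(1 - δ * deriv σ (x/δ) * u) •
              ((1 - δ * deriv σ (x/δ) * u) • γ'' (x - sigmaDel σ δ x * u)) +
              (0 - deriv (deriv σ) (x/δ) * u) • γ' (x - sigmaDel σ δ x * u)‖
            ≤ ‖(1 - δ * deriv σ (x/δ) * u) •
              ((1 - δ * deriv σ (x/δ) * u) • γ'' (x - sigmaDel σ δ x * u))‖ +
              ‖(0 - deriv (deriv σ) (x/δ) * u) • γ' (x - sigmaDel σ δ x * u)‖ :=
              norm_add_le _ _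
          _ = |1 - δ * deriv σ (x/δ) * u| *
              (|1 - δ * deriv σ (x/δ) * u| * ‖γ'' (x - sigmaDel σ δ x * u)‖) +
              |0 - deriv (deriv σ) (x/δ) * u| * ‖γ' (x - sigmaDel σ δ x * u)‖ := by
              simp only [norm_smul, Real.norm_eq_abs]
          _ ≤ (1 + δ * S₁) * ((1 + δ * S₁) * M₂) + S₂ * M₁ := add_le_add k1 k2
          _ = (1 + δ * S₁)^2 * M₂ + S₂ * M₁ := by ring
      exact mul_le_mul_of_nonneg_left key (hφ0 u)
  have hbd1int : Integrable (fun u : ℝ => φ u * ((1 + δ * S₁) * M₁)) := hφInt.mul_const _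
  have hbd2int : Integrable (fun u : ℝ => φ u * ((1 + δ * S₁)^2 * M₂ + S₂ * M₁)) :=
    hφInt.mul_const _
  -- first differentiation under the integral sign
  have L1 : ∀ s ∈ U, HasDerivAt (mollify φ σ δ γ)
      (∫ u : ℝ, φ u • ((1 - δ * deriv σ (s/δ) * u) •
        deriv γ (s - sigmaDel σ δ s * u))) s := by
    intro s hs
    obtain ⟨r, hr0, hrb⟩ := Metric.isOpen_iff.mp hUopen s hs
    have key := hasDerivAt_integral_of_dominated_loc_of_deriv_le (μ := volume) (𝕜 := ℝ)
      (F := fun x u => φ u • γ (x - sigmaDel σ δ x * u))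
      (F' := fun x u => φ u • ((1 - δ * deriv σ (x/δ) * u) •
        deriv γ (x - sigmaDel σ δ x * u)))
      (x₀ := s) (bound := fun u => φ u * ((1 + δ * S₁) * M₁)) (Metric.ball_mem_nhds s hr0)
      (Filter.eventually_of_mem (hUopen.mem_nhds hs)
        (fun x hx => (hcontF x (hUabs x hx)).aestronglyMeasurable))
      (hintF s (hUabs s hs)) (hmF1 s)
      (Filter.Eventually.of_forall (fun u x hx => hbF1 x (hrb hx) u))
      hbd1int
      (Filter.Eventually.of_forall (fun u x hx => by
        by_cases hu : φ u = 0
        · simp only [hu, zero_smul]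
          exact hasDerivAt_const x 0
        · have hu1 : |u| ≤ 1 := hsupp1 u hu
          have hxU := hrb hx
          have hpI := hptIoo x hxU u hu1
          have hpN := hptne x hxU u hu1
          have hin : HasDerivAt (fun y : ℝ => y - sigmaDel σ δ y * u)
              (1 - δ * deriv σ (x/δ) * u) x :=
            (hasDerivAt_id x).sub ((hσδ x).mul_const u)
          have hg := (hγ'1 _ hpI hpN).scomp x hin
          show HasDerivAt (fun y => φ u • γ (y - sigmaDel σ δ y * u))
            (φ u • ((1 - δ * deriv σ (x/δ) * u) • deriv γ (x - sigmaDel σ δ x * u))) x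
          rw [hder1 _ hpI hpN]
          exact hg.const_smul (φ u)))
    exact key.2
  -- second differentiation under the integral sign
  have L2 : HasDerivAt (fun s => ∫ u : ℝ, φ u • ((1 - δ * deriv σ (s/δ) * u) •
        deriv γ (s - sigmaDel σ δ s * u)))
      (∫ u : ℝ, φ u • ((1 - δ * deriv σ (t/δ) * u) •
          ((1 - δ * deriv σ (t/δ) * u) • deriv γ' (t - sigmaDel σ δ t * u)) +
          (0 - deriv (deriv σ) (t/δ) * u) • deriv γ (t - sigmaDel σ δ t * u))) t := by
    obtain ⟨r, hr0, hrb⟩ := Metric.isOpen_iff.mp hUopen t htU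
    have key := hasDerivAt_integral_of_dominated_loc_of_deriv_le (μ := volume) (𝕜 := ℝ)
      (F := fun x u => φ u • ((1 - δ * deriv σ (x/δ) * u) •
        deriv γ (x - sigmaDel σ δ x * u)))
      (F' := fun x u => φ u • ((1 - δ * deriv σ (x/δ) * u) •
          ((1 - δ * deriv σ (x/δ) * u) • deriv γ' (x - sigmaDel σ δ x * u)) +
          (0 - deriv (deriv σ) (x/δ) * u) • deriv γ (x - sigmaDel σ δ x * u)))
      (x₀ := t) (bound := fun u => φ u * ((1 + δ * S₁)^2 * M₂ + S₂ * M₁)) (Metric.ball_mem_nhds t hr0)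
      (Filter.Eventually.of_forall (fun x => hmF1 x))
      (hbd1int.mono (hmF1 t)
        (Filter.Eventually.of_forall (fun u => (hbF1 t htU u).trans (le_abs_self _))))
      (hmF2 t)
      (Filter.Eventually.of_forall (fun u x hx => hbF2 x (hrb hx) u))
      hbd2int
      (Filter.Eventually.of_forall (fun u x hx => by
        by_cases hu : φ u = 0
        · simp only [hu, zero_smul]
          exact hasDerivAt_const x 0
        · have hu1 : |u| ≤ 1 := hsupp1 u hu
          have hxU := hrb hx
          have hpI := hptIoo x hxU u hu1
          have hpN := hptne x hxU u hu1
          have hin : HasDerivAt (fun y : ℝ => y - sigmaDel σ δ y * u)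
              (1 - δ * deriv σ (x/δ) * u) x :=
            (hasDerivAt_id x).sub ((hσδ x).mul_const u)
          have hAd : HasDerivAt (fun y : ℝ => 1 - δ * deriv σ (y/δ) * u)
              (0 - deriv (deriv σ) (x/δ) * u) x :=
            (hasDerivAt_const x 1).sub ((hdσ x).mul_const u)
          have hBd : HasDerivAt (fun y : ℝ => γ' (y - sigmaDel σ δ y * u))
              ((1 - δ * deriv σ (x/δ) * u) • γ'' (x - sigmaDel σ δ x * u)) x :=
            (hγ''1 _ hpI hpN).scomp x hin
          have hprod := (hAd.smul hBd).const_smul (φ u)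
          have heq : (fun y => φ u • ((1 - δ * deriv σ (y/δ) * u) •
                deriv γ (y - sigmaDel σ δ y * u)))
              =ᶠ[nhds x] (fun y => φ u • ((1 - δ * deriv σ (y/δ) * u) •
                γ' (y - sigmaDel σ δ y * u))) := by
            refine Filter.eventuallyEq_of_mem (hUopen.mem_nhds hxU) (fun y hy => ?_)
            rw [hder1 _ (hptIoo y hy u hu1) (hptne y hy u hu1)]
          show HasDerivAt (fun y => φ u • ((1 - δ * deriv σ (y/δ) * u) •
              deriv γ (y - sigmaDel σ δ y * u)))
            (φ u • ((1 - δ * deriv σ (x/δ) * u) •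
              ((1 - δ * deriv σ (x/δ) * u) • deriv γ' (x - sigmaDel σ δ x * u)) +
              (0 - deriv (deriv σ) (x/δ) * u) • deriv γ (x - sigmaDel σ δ x * u))) x
          rw [hder1 _ hpI hpN, hder2 _ hpI hpN]
          exact HasDerivAt.congr_of_eventuallyEq hprod heq))
    exact key.2
  -- conclusion
  have hEq : deriv (mollify φ σ δ γ) =ᶠ[nhds t]
      (fun s => ∫ u : ℝ, φ u • ((1 - δ * deriv σ (s/δ) * u) •
        deriv γ (s - sigmaDel σ δ s * u))) :=
    Filter.eventually_of_mem (hUopen.mem_nhds htU) (fun s hs => (L1 s hs).deriv)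
  rw [hEq.deriv_eq, L2.deriv]
  refine le_trans (norm_integral_le_of_norm_le hbd2int
    (Filter.Eventually.of_forall (fun u => hbF2 t htU u))) ?_
  rw [integral_mul_const, hφint, one_mul]
end
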